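/- For every real λ, the skew-normal density is strongly unimodal: the function x ↦ log(2 φ(x) Φ(λx)) is concave on ℝ. -/

import Mathlib

open MeasureTheory

/-- Standard normal density. -/
noncomputable def normPdf (x : ℝ) : ℝ := Real.exp (-x ^ 2 / 2) / Real.sqrt (2 * Real.pi)

/-- Standard normal cdf. -/
noncomputable def normCdf (x : ℝ) : ℝ := ∫ t in Set.Iic x, normPdf t

open Real Set Filter Topology

lemma normPdf_pos (x : ℝ) : 0 < normPdf x := by
  unfold normPdf
  have : 0 < Real.sqrt (2 * Real.pi) := Real.sqrt_pos.mpr (by positivity)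
  positivity

lemma continuous_normPdf : Continuous normPdf := by
  unfold normPdf; fun_prop

lemma integrable_normPdf : Integrable normPdf := by
  have h := (integrable_exp_neg_mul_sq (show (0:ℝ) < 1/2 by norm_num)).div_const
    (Real.sqrt (2 * Real.pi))
  refine h.congr (Eventually.of_forall fun x => ?_)
  unfold normPdf; ring_nf

lemma integrable_id_mul_normPdf : Integrable (fun t : ℝ => t * normPdf t) := by
  have h := (integrable_mul_exp_neg_mul_sq (show (0:ℝ) < 1/2 by norm_num)).div_const
    (Real.sqrt (2 * Real.pi))
  refine h.congr (Eventually.of_forall fun x => ?_)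
  unfold normPdf; ring_nf

lemma hasDerivAt_normPdf (x : ℝ) : HasDerivAt normPdf (-x * normPdf x) x := by
  have h1 : HasDerivAt (fun y : ℝ => -y ^ 2 / 2) (-x) x := by
    have h := ((hasDerivAt_pow 2 x).neg).div_const 2
    refine h.congr_deriv ?_
    simp
    ring
  have h2 := (h1.exp).div_const (Real.sqrt (2 * Real.pi))
  refine h2.congr_deriv ?_
  unfold normPdf; ring

lemma normCdf_pos (x : ℝ) : 0 < normCdf x := by
  unfold normCdf
  rw [setIntegral_pos_iff_support_of_nonneg_ae
    (Eventually.of_forall fun t => (normPdf_pos t).le) integrable_normPdf.integrableOn]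
  have hsupp : Function.support normPdf = univ := by
    ext t; simp [Function.mem_support, (normPdf_pos t).ne']
  rw [hsupp, univ_inter]
  simp [Real.volume_Iic]

lemma hasDerivAt_normCdf (x : ℝ) : HasDerivAt normCdf (normPdf x) x := by
  have key : ∀ y : ℝ, normCdf y = normCdf 0 + ∫ t in (0:ℝ)..y, normPdf t := by
    intro y
    have := intervalIntegral.integral_Iic_sub_Iic (a := (0:ℝ)) (b := y)
      integrable_normPdf.integrableOn integrable_normPdf.integrableOn
    unfold normCdf; linarith
  have h : HasDerivAt (fun y : ℝ => normCdf 0 + ∫ t in (0:ℝ)..y, normPdf t) (normPdf x) x := by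
    refine HasDerivAt.const_add _ ?_
    exact intervalIntegral.integral_hasDerivAt_right
      (integrable_normPdf.intervalIntegrable)
      (continuous_normPdf.stronglyMeasurable.stronglyMeasurableAtFilter)
      continuous_normPdf.continuousAt
  exact h.congr_of_eventuallyEq (Eventually.of_forall key)

lemma tendsto_normPdf_atBot : Tendsto normPdf atBot (𝓝 0) := by
  have h1 : Tendsto (fun y : ℝ => -y ^ 2 / 2) atBot atBot := by
    have hsq : Tendsto (fun y : ℝ => y ^ 2) atBot atTop := by
      simpa [sq] using Filter.Tendsto.atBot_mul_atBot₀ tendsto_id (tendsto_id (α := ℝ))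
    have := (tendsto_neg_atTop_atBot.comp hsq)
    exact Tendsto.atBot_div_const (by norm_num) this
  have h2 : Tendsto (fun y : ℝ => Real.exp (-y ^ 2 / 2)) atBot (𝓝 0) :=
    Real.tendsto_exp_atBot.comp h1
  have h3 := h2.div_const (Real.sqrt (2 * Real.pi))
  rw [show (0:ℝ) = 0 / Real.sqrt (2 * Real.pi) by simp]
  exact h3

lemma integral_id_mul_normPdf (x : ℝ) :
    ∫ t in Iic x, t * normPdf t = -normPdf x := by
  have h : ∫ t in Iic x, t * normPdf t = (fun y => -normPdf y) x - 0 := by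
    apply MeasureTheory.integral_Iic_of_hasDerivAt_of_tendsto'
    · intro y _
      exact (hasDerivAt_normPdf y).neg.congr_deriv (by ring)
    · exact integrable_id_mul_normPdf.integrableOn
    · simpa using tendsto_normPdf_atBot.neg
  simpa using h

lemma mills (x : ℝ) : 0 ≤ x * normCdf x + normPdf x := by
  rcases le_or_gt 0 x with hx | hx
  · have h1 := (normCdf_pos x).le
    have h2 := (normPdf_pos x).le
    nlinarith
  · have hle : normCdf x ≤ ∫ t in Iic x, (t / x) * normPdf t := by
      unfold normCdf
      refine setIntegral_mono_on integrable_normPdf.integrableOn ?_ measurableSet_Iic ?_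
      · have : Integrable (fun t : ℝ => x⁻¹ * (t * normPdf t)) :=
          integrable_id_mul_normPdf.const_mul _
        refine this.integrableOn.congr_fun (fun t _ => by ring) measurableSet_Iic
      · intro t ht
        have h1 : (1:ℝ) ≤ t / x := by
          rw [le_div_iff_of_neg hx]
          simpa using ht.out
        nlinarith [normPdf_pos t]
    have heq : ∫ t in Iic x, (t / x) * normPdf t = -normPdf x / x := by
      have : ∫ t in Iic x, (t / x) * normPdf t = x⁻¹ * ∫ t in Iic x, t * normPdf t := by
        rw [← integral_const_mul]
        congr 1; ext t; ring
      rw [this, integral_id_mul_normPdf]; field_simp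
    rw [heq] at hle
    have := (le_div_iff_of_neg hx).mp hle
    linarith

/-- The skew-normal density is strongly unimodal: its logarithm is concave on `ℝ`. -/
theorem sn_log_concave (l : ℝ) :
    ConcaveOn ℝ Set.univ fun x : ℝ => Real.log (2 * normPdf x * normCdf (l * x)) := by
  -- derivative pieces
  have hΦ : ∀ x : ℝ, HasDerivAt (fun y : ℝ => normCdf (l * y)) (normPdf (l * x) * l) x := by
    intro x
    have hin : HasDerivAt (fun y : ℝ => l * y) l x := by
      simpa using (hasDerivAt_id x).const_mul l
    exact (hasDerivAt_normCdf (l * x)).comp x hin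
  have hφ : ∀ x : ℝ, HasDerivAt (fun y : ℝ => normPdf (l * y)) (-(l*x) * normPdf (l * x) * l) x := by
    intro x
    have hin : HasDerivAt (fun y : ℝ => l * y) l x := by
      simpa using (hasDerivAt_id x).const_mul l
    exact ((hasDerivAt_normPdf (l * x)).comp x hin).congr_deriv (by ring)
  set f1 : ℝ → ℝ := fun x => -x + l * (normPdf (l * x) / normCdf (l * x)) with hf1def
  have hA : ∀ x : ℝ, HasDerivAt (fun x : ℝ => Real.log (2 * normPdf x * normCdf (l * x)))
      (f1 x) x := by
    intro x
    have h1 : HasDerivAt (fun y : ℝ => 2 * normPdf y * normCdf (l * y))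
        (2 * (-x * normPdf x) * normCdf (l * x) + 2 * normPdf x * (normPdf (l * x) * l)) x :=
      (((hasDerivAt_normPdf x).const_mul 2).mul (hΦ x))
    have h2 : (2 : ℝ) * normPdf x * normCdf (l * x) ≠ 0 := by
      have := normPdf_pos x; have := normCdf_pos (l * x); positivity
    have h3 := h1.log h2
    convert h3 using 1
    have hp := (normPdf_pos x).ne'
    have hc := (normCdf_pos (l * x)).ne'
    rw [hf1def]
    field_simp
    have hc' : normCdf (x * l) ≠ 0 := by rwa [mul_comm]
    field_simp
  set f2 : ℝ → ℝ := fun x => -1 + l * ((-(l*x) * normPdf (l * x) * l * normCdf (l * x)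
      - normPdf (l * x) * (normPdf (l * x) * l)) / normCdf (l * x) ^ 2) with hf2def
  have hB : ∀ x : ℝ, HasDerivAt f1 (f2 x) x := by
    intro x
    have hdiv := ((hφ x).div (hΦ x) (normCdf_pos (l * x)).ne')
    exact ((hasDerivAt_id x).neg).add (hdiv.const_mul l)
  have hneg : ∀ x : ℝ, f2 x ≤ 0 := by
    intro x
    rw [hf2def]
    have hm := mills (l * x)
    have hp := normPdf_pos (l * x)
    have hc := normCdf_pos (l * x)
    have key : l * ((-(l*x) * normPdf (l * x) * l * normCdf (l * x)
        - normPdf (l * x) * (normPdf (l * x) * l)) / normCdf (l * x) ^ 2) ≤ 0 := by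
      rw [mul_div_assoc']
      apply div_nonpos_of_nonpos_of_nonneg _ (by positivity)
      nlinarith [mul_nonneg (mul_nonneg (sq_nonneg l) hp.le) hm]
    linarith
  -- assemble
  have hderiv1 : deriv (fun x : ℝ => Real.log (2 * normPdf x * normCdf (l * x))) = f1 :=
    funext fun x => (hA x).deriv
  apply concaveOn_univ_of_deriv2_nonpos
  · exact fun x => (hA x).differentiableAt
  · rw [hderiv1]; exact fun x => (hB x).differentiableAt
  · intro x
    simp only [Function.iterate_succ, Function.iterate_zero, Function.comp_apply, id]
    rw [hderiv1, (hB x).deriv]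
    exact hneg x
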